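/- For every s ≥ 1 and all positive integers j₁, …, j_s, the 2s×2s block-diagonal symmetric integer matrix whose i-th 2×2 block has rows (0, 2^{jᵢ}) and (2^{jᵢ}, 0) is not GL(ℤ)-congruent to any symmetric integer matrix all of whose off-diagonal entries lie in {0,1}; in particular it is not treelike. -/

import Mathlib

open Matrix

/-- A symmetric integer matrix is a *tree matrix* if its off-diagonal entries lie in `{0,1}`
and the simple graph in which distinct `i`, `j` are adjacent exactly when the `(i,j)` entry is
`1` is a tree. -/
def IsTreeMatrix {n : ℕ} (B : Matrix (Fin n) (Fin n) ℤ) : Prop :=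
  B.IsSymm ∧ (∀ i j, i ≠ j → B i j = 0 ∨ B i j = 1) ∧
    (SimpleGraph.fromRel fun i j => B i j = 1).IsTree

/-- Two symmetric integer matrices are `GL(ℤ)`-congruent if one equals `Pᵀ A P` for an integer
matrix `P` with `det P = ±1`. -/
def GLZCongruent {n : ℕ} (A B : Matrix (Fin n) (Fin n) ℤ) : Prop :=
  ∃ P : Matrix (Fin n) (Fin n) ℤ, (P.det = 1 ∨ P.det = -1) ∧ B = Pᵀ * A * P

/-- A symmetric integer matrix is *treelike* if it is `GL(ℤ)`-congruent to a tree matrix. -/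
def IsTreelike {n : ℕ} (A : Matrix (Fin n) (Fin n) ℤ) : Prop :=
  ∃ B : Matrix (Fin n) (Fin n) ℤ, IsTreeMatrix B ∧ GLZCongruent A B

/-- Lemma 5.3 (the `H₊`-part): for `s ≥ 1` and positive integers `j₁, …, j_s`, the
block-diagonal sum of the scaled hyperbolic matrices `H₊(2^{jᵢ}) = !![0, 2^{jᵢ}; 2^{jᵢ}, 0]`
is not `GL(ℤ)`-congruent to any symmetric integer matrix with off-diagonal entries in `{0,1}`;
in particular it is not treelike. -/
lemma dvd_mul3_entries {n : ℕ} (c : ℤ) (X B Y : Matrix (Fin n) (Fin n) ℤ)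
    (h : ∀ i j, c ∣ B i j) : ∀ i j, c ∣ (X * B * Y) i j := by
  intro i k
  rw [Matrix.mul_apply]
  refine Finset.dvd_sum fun l _ => ?_
  rw [Matrix.mul_apply]
  exact Dvd.dvd.mul_right (Finset.dvd_sum fun a _ => (h a l).mul_left _) _


theorem stmt_13 (s : ℕ) (hs : 1 ≤ s) (j : Fin s → ℕ) (hj : ∀ i, 1 ≤ j i) :
    (¬ ∃ B : Matrix (Fin (2 * s)) (Fin (2 * s)) ℤ,
        B.IsSymm ∧ (∀ i k, i ≠ k → B i k = 0 ∨ B i k = 1) ∧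
        GLZCongruent
          (Matrix.reindex finProdFinEquiv finProdFinEquiv
            (Matrix.blockDiagonal fun i : Fin s => !![(0 : ℤ), 2 ^ j i; 2 ^ j i, 0])) B) ∧
    ¬ IsTreelike
        (Matrix.reindex finProdFinEquiv finProdFinEquiv
          (Matrix.blockDiagonal fun i : Fin s => !![(0 : ℤ), 2 ^ j i; 2 ^ j i, 0])) := by
  set d : Fin s → Matrix (Fin 2) (Fin 2) ℤ := fun i => !![(0 : ℤ), 2 ^ j i; 2 ^ j i, 0] with hd
  set A : Matrix (Fin (2 * s)) (Fin (2 * s)) ℤ :=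
    Matrix.reindex finProdFinEquiv finProdFinEquiv (Matrix.blockDiagonal d) with hA
  -- a minimizing index
  have hsne : (Finset.univ : Finset (Fin s)).Nonempty := by
    have : Nonempty (Fin s) := ⟨⟨0, by omega⟩⟩
    exact Finset.univ_nonempty
  obtain ⟨i₀, -, hmin⟩ := Finset.exists_min_image Finset.univ j hsne
  set m := j i₀ with hm
  -- all entries of A are divisible by 2^m
  have hAdvd : ∀ p q, (2 : ℤ) ^ m ∣ A p q := by
    intro p q
    show (2:ℤ)^m ∣ Matrix.blockDiagonal d (finProdFinEquiv.symm p) (finProdFinEquiv.symm q)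
    obtain ⟨a, i⟩ := finProdFinEquiv.symm p
    obtain ⟨b, i'⟩ := finProdFinEquiv.symm q
    rw [Matrix.blockDiagonal_apply]
    split
    · have hdvd : (2:ℤ)^m ∣ 2 ^ j i := pow_dvd_pow 2 (hmin i (Finset.mem_univ i))
      fin_cases a <;> fin_cases b <;> simp [hd] <;> exact hdvd
    · exact dvd_zero _
  -- A is symmetric with zero diagonal
  have hAsymm : ∀ p q, A p q = A q p := by
    intro p q
    show Matrix.blockDiagonal d (finProdFinEquiv.symm p) (finProdFinEquiv.symm q)
        = Matrix.blockDiagonal d (finProdFinEquiv.symm q) (finProdFinEquiv.symm p)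
    obtain ⟨a, i⟩ := finProdFinEquiv.symm p
    obtain ⟨b, i'⟩ := finProdFinEquiv.symm q
    rw [Matrix.blockDiagonal_apply, Matrix.blockDiagonal_apply]
    rcases eq_or_ne i i' with h | h
    · subst h
      rw [if_pos rfl, if_pos rfl]
      fin_cases a <;> fin_cases b <;> simp [hd]
    · rw [if_neg h, if_neg (Ne.symm h)]
  have hAdiag : ∀ p, A p p = 0 := by
    intro p
    show Matrix.blockDiagonal d (finProdFinEquiv.symm p) (finProdFinEquiv.symm p) = 0
    obtain ⟨a, i⟩ := finProdFinEquiv.symm p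
    rw [Matrix.blockDiagonal_apply, if_pos rfl]
    fin_cases a <;> simp [hd]
  -- the distinguished entry equal to 2^m
  have hentry : A (finProdFinEquiv (0, i₀)) (finProdFinEquiv (1, i₀)) = 2 ^ m := by
    show Matrix.blockDiagonal d (finProdFinEquiv.symm (finProdFinEquiv (0, i₀)))
        (finProdFinEquiv.symm (finProdFinEquiv (1, i₀))) = 2 ^ m
    rw [Equiv.symm_apply_apply, Equiv.symm_apply_apply, Matrix.blockDiagonal_apply, if_pos rfl]
    simp [hd, hm]
  -- main claim
  have main : ¬ ∃ B : Matrix (Fin (2 * s)) (Fin (2 * s)) ℤ,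
      B.IsSymm ∧ (∀ i k, i ≠ k → B i k = 0 ∨ B i k = 1) ∧ GLZCongruent A B := by
    rintro ⟨B, hBsymm, hB01, P, hPdet, hPB⟩
    -- P invertible
    have hPu : IsUnit P.det := by
      rcases hPdet with h | h <;> rw [h]
      · exact isUnit_one
      · exact IsUnit.neg isUnit_one
    haveI := P.invertibleOfIsUnitDet hPu
    -- upper triangular part N with A = N + Nᵀ
    set N : Matrix (Fin (2 * s)) (Fin (2 * s)) ℤ :=
      Matrix.of (fun p q => if p < q then A p q else 0) with hN
    have hNA : A = N + Nᵀ := by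
      ext p q
      rcases lt_trichotomy p q with h | h | h
      · simp [hN, Matrix.transpose_apply, h, not_lt.mpr h.le]
      · subst h; simp [hN, hAdiag p]
      · simp [hN, Matrix.transpose_apply, h, not_lt.mpr h.le, hAsymm p q]
    set M : Matrix (Fin (2 * s)) (Fin (2 * s)) ℤ := Pᵀ * N * P with hM
    have hBMM : B = M + Mᵀ := by
      rw [hPB, hNA, Matrix.mul_add, Matrix.add_mul, hM]
      congr 1
      rw [Matrix.transpose_mul, Matrix.transpose_mul, Matrix.transpose_transpose,
        Matrix.mul_assoc]
    have hMdvd : ∀ p q, (2 : ℤ) ^ m ∣ M p q := by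
      refine dvd_mul3_entries _ _ _ _ ?_
      intro p q
      by_cases h : p < q
      · simpa [hN, h] using hAdvd p q
      · simp [hN, h]
    -- every entry of B is divisible by 2^(m+1)
    have hBdvd : ∀ p q, (2 : ℤ) ^ (m + 1) ∣ B p q := by
      intro p q
      rcases eq_or_ne p q with rfl | h
      · have : B p p = 2 * M p p := by
          rw [hBMM]; simp [Matrix.transpose_apply, two_mul]
        rw [this, pow_succ, mul_comm ((2:ℤ)^m) 2]
        exact mul_dvd_mul_left 2 (hMdvd p p)
      · have heven : (2 : ℤ) ∣ B p q := by
          have h1 : (2:ℤ) ∣ M p q := dvd_trans (dvd_pow_self 2 (Nat.one_le_iff_ne_zero.mp (hj i₀) : m ≠ 0)) (hMdvd p q)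
          have h2 : (2:ℤ) ∣ M q p := dvd_trans (dvd_pow_self 2 (Nat.one_le_iff_ne_zero.mp (hj i₀) : m ≠ 0)) (hMdvd q p)
          rw [hBMM]
          exact dvd_add h1 (by simpa [Matrix.transpose_apply] using h2)
        rcases hB01 p q h with h0 | h1
        · rw [h0]; exact dvd_zero _
        · rw [h1] at heven; norm_num at heven
    -- transfer back to A
    have hAfromB : A = (⅟P)ᵀ * B * ⅟P := by
      have h1 : (⅟P)ᵀ * Pᵀ = 1 := by
        rw [← Matrix.transpose_mul, mul_invOf_self, Matrix.transpose_one]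
      have h2 : P * ⅟P = 1 := mul_invOf_self P
      have h3 : (⅟P)ᵀ * (Pᵀ * A * P) * ⅟P = ((⅟P)ᵀ * Pᵀ) * A * (P * ⅟P) := by
        simp only [Matrix.mul_assoc]
      rw [hPB, h3, h1, h2, Matrix.one_mul, Matrix.mul_one]
    have hAdvd' : (2 : ℤ) ^ (m + 1) ∣ A (finProdFinEquiv (0, i₀)) (finProdFinEquiv (1, i₀)) := by
      rw [hAfromB]
      exact dvd_mul3_entries _ _ _ _ hBdvd _ _
    rw [hentry] at hAdvd'
    have hle : (2 : ℤ) ^ (m + 1) ≤ 2 ^ m := Int.le_of_dvd (by positivity) hAdvd'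
    have : (2 : ℤ) ^ m < 2 ^ (m + 1) := by
      have := pow_lt_pow_right₀ (by norm_num : (1:ℤ) < 2) (Nat.lt_succ_self m)
      exact this
    omega
  refine ⟨main, ?_⟩
  rintro ⟨B, ⟨hsymm, h01, -⟩, hcong⟩
  exact main ⟨B, hsymm, h01, hcong⟩
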